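/- For 0 < α < 1 and L > 0, the fixed-memory-length fractional derivative of cos satisfies D^α_L(cos)(t) = a·cos(t-L) − b·sin(t-L), where a = L^(-α)·E_{2,1-α}(-L²) and b = L^(1-α)·E_{2,2-α}(-L²). -/

import Mathlib

open Real

noncomputable def Dfml (α L : ℝ) (f : ℝ → ℝ) (t : ℝ) : ℝ :=
  f (t - L) * L ^ (-α) / Real.Gamma (1 - α)
  + deriv f (t - L) * L ^ (1 - α) / Real.Gamma (2 - α)
  + (1 / Real.Gamma (2 - α)) * ∫ τ in (t - L)..t, (t - τ) ^ (1 - α) * deriv (deriv f) τ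

noncomputable def mittagLeffler (a b z : ℝ) : ℝ := ∑' k : ℕ, z ^ k / Real.Gamma (a * k + b)

section Aux

open MeasureTheory intervalIntegral

private lemma betaJ (c : ℝ) (hc : 0 < c) (n : ℕ) :
    ∫ x in (0:ℝ)..1, x ^ c * (1 - x) ^ n
      = Real.Gamma (c + 1) * n.factorial / Real.Gamma (c + n + 2) := by
  have hre1 : (0:ℝ) < ((((c+1):ℝ)):ℂ).re := by simp; linarith
  have hre2 : (0:ℝ) < (((n:ℂ))+1).re := by simp; positivity
  have key := Complex.Gamma_mul_Gamma_eq_betaIntegral hre1 hre2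
  have hbeta : Complex.betaIntegral ((c+1:ℝ):ℂ) ((n:ℂ)+1)
      = ((∫ x in (0:ℝ)..1, x ^ c * (1 - x) ^ n : ℝ) : ℂ) := by
    rw [Complex.betaIntegral, ← intervalIntegral.integral_ofReal]
    apply intervalIntegral.integral_congr
    intro x hx
    rw [Set.uIcc_of_le (by norm_num : (0:ℝ) ≤ 1)] at hx
    have hx0 : (0:ℝ) ≤ x := hx.1
    have e1 : ((c+1:ℝ):ℂ) - 1 = ((c:ℝ):ℂ) := by push_cast; ring
    have e2 : ((n:ℂ)+1) - 1 = ((n:ℕ):ℂ) := by push_cast; ring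
    have e3 : (1:ℂ) - (x:ℂ) = (((1 - x : ℝ)):ℂ) := by push_cast; ring
    simp only [e1, e2, e3, Complex.cpow_natCast, ← Complex.ofReal_cpow hx0]
    push_cast
    ring
  rw [hbeta] at key
  have e4 : ((c+1:ℝ):ℂ) + ((n:ℂ)+1) = ((c + n + 2 : ℝ):ℂ) := by push_cast; ring
  have e5 : Complex.Gamma ((n:ℂ)+1) = ((n.factorial : ℝ):ℂ) := by
    rw [Complex.Gamma_nat_eq_factorial]; norm_num
  rw [e4, e5, Complex.Gamma_ofReal, Complex.Gamma_ofReal] at key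
  have key2 : Real.Gamma (c+1) * n.factorial
      = Real.Gamma (c + n + 2) * ∫ x in (0:ℝ)..1, x ^ c * (1 - x) ^ n := by
    exact_mod_cast key
  have hg : Real.Gamma (c + n + 2) ≠ 0 := by
    have : (0:ℝ) < c + n + 2 := by positivity
    exact (Real.Gamma_pos_of_pos this).ne'
  field_simp [hg]
  linarith [key2]

private lemma betaI (c L : ℝ) (hc : 0 < c) (hL : 0 < L) (n : ℕ) :
    ∫ u in (0:ℝ)..L, u ^ c * (L - u) ^ n
      = Real.Gamma (c + 1) * n.factorial / Real.Gamma (c + n + 2) * L ^ (c + n + 1) := by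
  have hsub := intervalIntegral.integral_comp_mul_left
    (a := (0:ℝ)) (b := 1) (fun u => u ^ c * (L - u) ^ n) hL.ne'
  simp only [mul_zero, mul_one, smul_eq_mul] at hsub
  have hcongr : ∫ x in (0:ℝ)..1, (fun u => u ^ c * (L - u) ^ n) (L * x)
      = ∫ x in (0:ℝ)..1, (L ^ c * L ^ n) * (x ^ c * (1 - x) ^ n) := by
    apply intervalIntegral.integral_congr
    intro x hx
    rw [Set.uIcc_of_le (by norm_num : (0:ℝ) ≤ 1)] at hx
    have hx0 : (0:ℝ) ≤ x := hx.1
    simp only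
    rw [Real.mul_rpow hL.le hx0, show L - L * x = L * (1 - x) by ring, mul_pow]
    ring
  rw [hcongr, intervalIntegral.integral_const_mul, betaJ c hc n] at hsub
  have h2 : ∫ u in (0:ℝ)..L, u ^ c * (L - u) ^ n
      = L * (L ^ c * L ^ n * (Real.Gamma (c+1) * n.factorial / Real.Gamma (c + n + 2))) := by
    rw [hsub, ← mul_assoc, mul_inv_cancel₀ hL.ne', one_mul]
  rw [h2, ← Real.rpow_natCast L n]
  have h3 : L ^ (c + (n:ℝ) + 1) = L * (L ^ c * L ^ (n:ℝ)) := by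
    rw [show c + (n:ℝ) + 1 = 1 + (c + (n:ℝ)) by ring, Real.rpow_add hL, Real.rpow_add hL,
      Real.rpow_one]
  rw [h3]
  ring

private lemma hasSumInt (c L : ℝ) (hc : 0 < c) (hL : 0 < L) (e : ℕ → ℕ)
    (hinj : Function.Injective e) (f : ℝ → ℝ)
    (hf : ∀ x : ℝ, f x = ∑' k : ℕ, (-1)^k * x ^ (e k) / (e k).factorial) :
    HasSum (fun k : ℕ => (-1)^k * Real.Gamma (c+1) * L ^ (c + (e k : ℝ) + 1)
        / Real.Gamma (c + (e k : ℝ) + 2))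
      (∫ u in (0:ℝ)..L, u ^ c * f (L - u)) := by
  set F : ℕ → ℝ → ℝ :=
    fun k u => u ^ c * ((-1)^k * (L - u) ^ (e k) / (e k).factorial) with hF
  have hcont : ∀ k, Continuous (F k) := by
    intro k
    exact (Real.continuous_rpow_const hc.le).mul (by continuity)
  have hInt : ∀ k, Integrable (F k) (volume.restrict (Set.Ioc (0:ℝ) L)) := by
    intro k
    exact (hcont k).integrableOn_Ioc
  have hbound : ∀ k, ∀ u ∈ Set.Ioc (0:ℝ) L,
      ‖F k u‖ ≤ L ^ c * (L ^ (e k) / (e k).factorial) := by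
    intro k u hu
    have h1 : 0 < u := hu.1
    have h2 : u ≤ L := hu.2
    have hLu : 0 ≤ L - u := by linarith
    rw [hF]
    simp only [Real.norm_eq_abs, abs_mul, abs_div, abs_pow, abs_neg, abs_one, one_pow, one_mul,
      abs_of_nonneg (Real.rpow_nonneg h1.le c), abs_of_nonneg hLu, Nat.abs_cast]
    gcongr <;> linarith
  have hbd2 : ∀ k, ∫ u in Set.Ioc (0:ℝ) L, ‖F k u‖
      ≤ L * (L ^ c * (L ^ (e k) / (e k).factorial)) := by
    intro k
    have := MeasureTheory.setIntegral_mono_on ((hInt k).norm)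
      (integrableOn_const (by simp [Real.volume_Ioc]))
      measurableSet_Ioc (hbound k)
    rw [MeasureTheory.setIntegral_const, measureReal_def, Real.volume_Ioc, smul_eq_mul,
      ENNReal.toReal_ofReal (by linarith)] at this
    simpa using this
  have hsummable : Summable (fun k => ∫ u in Set.Ioc (0:ℝ) L, ‖F k u‖) := by
    apply Summable.of_nonneg_of_le
      (fun k => MeasureTheory.integral_nonneg (fun u => norm_nonneg _)) hbd2
    have hbase : Summable (fun n : ℕ => L ^ n / n.factorial) :=
      Real.summable_pow_div_factorial L
    exact ((hbase.comp_injective hinj).mul_left (L ^ c)).mul_left L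
  have hsum0 := MeasureTheory.hasSum_integral_of_summable_integral_norm hInt hsummable
  have hval : ∫ u in Set.Ioc (0:ℝ) L, ∑' k, F k u = ∫ u in (0:ℝ)..L, u ^ c * f (L - u) := by
    rw [intervalIntegral.integral_of_le hL.le]
    apply MeasureTheory.setIntegral_congr_fun measurableSet_Ioc
    intro u _
    rw [hF]
    simp only
    rw [tsum_mul_left, hf (L - u)]
  rw [hval] at hsum0
  convert hsum0 using 2 with k
  · rfl
  have hek : ((e k).factorial : ℝ) ≠ 0 := by positivity
  have heq : ∫ u in Set.Ioc (0:ℝ) L, F k u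
      = ((-1)^k / (e k).factorial) * ∫ u in (0:ℝ)..L, u ^ c * (L - u) ^ (e k) := by
    rw [← intervalIntegral.integral_const_mul, intervalIntegral.integral_of_le hL.le]
    apply MeasureTheory.setIntegral_congr_fun measurableSet_Ioc
    intro u _
    rw [hF]; simp only; ring
  rw [heq, betaI c L hc hL (e k)]
  field_simp

private lemma mlSplit (q L : ℝ) (hL : 0 < L)
    (hsum : Summable (fun k : ℕ => (-1:ℝ)^k * L ^ (q + 2*(k:ℝ) + 1) / Real.Gamma (q + 2*(k:ℝ) + 2))) :
    L ^ (q - 1) * mittagLeffler 2 q (-L^2)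
      = L ^ (q - 1) / Real.Gamma q
        - ∑' k : ℕ, (-1:ℝ)^k * L ^ (q + 2*(k:ℝ) + 1) / Real.Gamma (q + 2*(k:ℝ) + 2) := by
  set S : ℕ → ℝ := fun k => (-1:ℝ)^k * L ^ (q + 2*(k:ℝ) + 1) / Real.Gamma (q + 2*(k:ℝ) + 2)
    with hS
  set a : ℕ → ℝ := fun k => L ^ (q - 1) * ((-L^2) ^ k / Real.Gamma (2 * (k:ℝ) + q)) with ha
  have key : ∀ k : ℕ, a (k + 1) = -(S k) := by
    intro k
    rw [ha, hS]
    simp only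
    have e1 : q + 2*(k:ℝ) + 1 = (q - 1) + ((2*(k+1) : ℕ) : ℝ) := by push_cast; ring
    have e2 : q + 2*(k:ℝ) + 2 = 2 * ((k:ℕ)+1 : ℝ) + q := by push_cast; ring
    have e3 : (2 : ℝ) * ((k + 1 : ℕ) : ℝ) + q = 2 * ((k:ℕ)+1 : ℝ) + q := by push_cast; ring
    rw [e1, e2, e3, Real.rpow_add hL, Real.rpow_natCast, neg_pow, ← pow_mul]
    ring
  have hsa : Summable a := by
    rw [← summable_nat_add_iff 1]
    exact (summable_congr key).mpr hsum.neg
  have hml : mittagLeffler 2 q (-L^2) = ∑' k : ℕ, (-L^2) ^ k / Real.Gamma (2 * (k:ℝ) + q) := rfl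
  rw [hml, ← tsum_mul_left]
  rw [hsa.tsum_eq_zero_add]
  have ha0 : a 0 = L ^ (q - 1) / Real.Gamma q := by
    rw [ha]; simp [mul_one_div, div_eq_mul_inv]
  have htail : ∑' k : ℕ, a (k + 1) = -∑' k : ℕ, S k := by
    rw [← tsum_neg]
    exact tsum_congr key
  rw [ha0, htail]
  ring

end Aux

theorem stmt_6 (α L : ℝ) (hα0 : 0 < α) (hα1 : α < 1) (hL : 0 < L) (t : ℝ) :
    Dfml α L Real.cos t
    = L ^ (-α) * mittagLeffler 2 (1 - α) (-L ^ 2) * Real.cos (t - L)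
      - L ^ (1 - α) * mittagLeffler 2 (2 - α) (-L ^ 2) * Real.sin (t - L) := by
  have hc : (0:ℝ) < 1 - α := by linarith
  have hq2 : (0:ℝ) < 2 - α := by linarith
  have hG2 : Real.Gamma (2 - α) ≠ 0 := (Real.Gamma_pos_of_pos hq2).ne'
  -- second derivative of cos
  have hdd : deriv (deriv Real.cos) = fun x => -Real.cos x := by
    rw [Real.deriv_cos']
    funext x
    rw [deriv.fun_neg, Real.deriv_sin]
  -- the two key HasSum facts
  have hK1 := hasSumInt (1 - α) L hc hL (fun k => 2 * k)
    (fun a b h => by dsimp at h; omega) Real.cos (fun x => Real.cos_eq_tsum x)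
  have hK2 := hasSumInt (1 - α) L hc hL (fun k => 2 * k + 1)
    (fun a b h => by dsimp at h; omega) Real.sin (fun x => Real.sin_eq_tsum x)
  set K1 : ℝ := ∫ u in (0:ℝ)..L, u ^ (1 - α) * Real.cos (L - u) with hK1def
  set K2 : ℝ := ∫ u in (0:ℝ)..L, u ^ (1 - α) * Real.sin (L - u) with hK2def
  -- rewrite the HasSum facts in the `mlSplit` shape
  have hS1 : HasSum (fun k : ℕ => (-1:ℝ)^k * L ^ ((1 - α) + 2*(k:ℝ) + 1)
      / Real.Gamma ((1 - α) + 2*(k:ℝ) + 2)) (K1 / Real.Gamma (2 - α)) := by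
    have h := hK1.div_const (Real.Gamma (2 - α))
    have hfun : (fun k : ℕ => (-1:ℝ)^k * Real.Gamma ((1-α)+1) * L ^ ((1-α) + ((2*k : ℕ):ℝ) + 1)
        / Real.Gamma ((1-α) + ((2*k : ℕ):ℝ) + 2) / Real.Gamma (2 - α))
        = fun k : ℕ => (-1:ℝ)^k * L ^ ((1 - α) + 2*(k:ℝ) + 1)
            / Real.Gamma ((1 - α) + 2*(k:ℝ) + 2) := by
      funext k
      have e1 : (1-α) + 1 = 2 - α := by ring
      have e2 : (1-α) + ((2*k : ℕ):ℝ) + 1 = (1 - α) + 2*(k:ℝ) + 1 := by push_cast; ring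
      have e3 : (1-α) + ((2*k : ℕ):ℝ) + 2 = (1 - α) + 2*(k:ℝ) + 2 := by push_cast; ring
      rw [e1, e2, e3]
      field_simp
    rwa [hfun] at h
  have hS2 : HasSum (fun k : ℕ => (-1:ℝ)^k * L ^ ((2 - α) + 2*(k:ℝ) + 1)
      / Real.Gamma ((2 - α) + 2*(k:ℝ) + 2)) (K2 / Real.Gamma (2 - α)) := by
    have h := hK2.div_const (Real.Gamma (2 - α))
    have hfun : (fun k : ℕ => (-1:ℝ)^k * Real.Gamma ((1-α)+1) * L ^ ((1-α) + ((2*k+1 : ℕ):ℝ) + 1)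
        / Real.Gamma ((1-α) + ((2*k+1 : ℕ):ℝ) + 2) / Real.Gamma (2 - α))
        = fun k : ℕ => (-1:ℝ)^k * L ^ ((2 - α) + 2*(k:ℝ) + 1)
            / Real.Gamma ((2 - α) + 2*(k:ℝ) + 2) := by
      funext k
      have e1 : (1-α) + 1 = 2 - α := by ring
      have e2 : (1-α) + ((2*k+1 : ℕ):ℝ) + 1 = (2 - α) + 2*(k:ℝ) + 1 := by push_cast; ring
      have e3 : (1-α) + ((2*k+1 : ℕ):ℝ) + 2 = (2 - α) + 2*(k:ℝ) + 2 := by push_cast; ring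
      rw [e1, e2, e3]
      field_simp
    rwa [hfun] at h
  -- Mittag-Leffler identities
  have hA : L ^ (-α) * mittagLeffler 2 (1 - α) (-L^2)
      = L ^ (-α) / Real.Gamma (1 - α) - K1 / Real.Gamma (2 - α) := by
    have := mlSplit (1 - α) L hL hS1.summable
    rw [show (1 - α) - 1 = -α by ring] at this
    rw [this, hS1.tsum_eq]
  have hB : L ^ (1 - α) * mittagLeffler 2 (2 - α) (-L^2)
      = L ^ (1 - α) / Real.Gamma (2 - α) - K2 / Real.Gamma (2 - α) := by
    have := mlSplit (2 - α) L hL hS2.summable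
    rw [show (2 - α) - 1 = 1 - α by ring] at this
    rw [this, hS2.tsum_eq]
  -- compute the integral in Dfml
  have hIcont : Continuous fun u : ℝ => u ^ (1 - α) * Real.cos (L - u) :=
    (Real.continuous_rpow_const hc.le).mul
      (Real.continuous_cos.comp (continuous_const.sub continuous_id))
  have hIcont' : Continuous fun u : ℝ => u ^ (1 - α) * Real.sin (L - u) :=
    (Real.continuous_rpow_const hc.le).mul
      (Real.continuous_sin.comp (continuous_const.sub continuous_id))
  have hint1 : (∫ τ in (t - L)..t, (t - τ) ^ (1 - α) * deriv (deriv Real.cos) τ)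
      = -∫ u in (0:ℝ)..L, u ^ (1 - α) * Real.cos (t - u) := by
    simp only [hdd]
    have hpt : ∀ τ : ℝ, (t - τ) ^ (1 - α) * -Real.cos τ
        = -((fun u => u ^ (1 - α) * Real.cos (t - u)) (t - τ)) := by
      intro τ
      simp only [sub_sub_cancel]
      ring
    simp only [hpt]
    rw [intervalIntegral.integral_neg,
      intervalIntegral.integral_comp_sub_left (fun u => u ^ (1 - α) * Real.cos (t - u)) t,
      sub_self, sub_sub_cancel]
  have hint2 : (∫ u in (0:ℝ)..L, u ^ (1 - α) * Real.cos (t - u))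
      = Real.cos (t - L) * K1 - Real.sin (t - L) * K2 := by
    have hpt : ∀ u : ℝ, u ^ (1 - α) * Real.cos (t - u)
        = Real.cos (t - L) * (u ^ (1 - α) * Real.cos (L - u))
          - Real.sin (t - L) * (u ^ (1 - α) * Real.sin (L - u)) := by
      intro u
      rw [show t - u = (t - L) + (L - u) by ring, Real.cos_add]
      ring
    simp only [hpt]
    rw [intervalIntegral.integral_sub
      (f := fun u => Real.cos (t - L) * (u ^ (1 - α) * Real.cos (L - u)))
      (g := fun u => Real.sin (t - L) * (u ^ (1 - α) * Real.sin (L - u)))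
      ((continuous_const.mul hIcont).intervalIntegrable _ _)
      ((continuous_const.mul hIcont').intervalIntegrable _ _),
      intervalIntegral.integral_const_mul, intervalIntegral.integral_const_mul]
  -- final assembly
  simp only [Dfml]
  rw [hint1, hint2]
  simp only [Real.deriv_cos']
  rw [hA, hB]
  ring
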